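/- Let K be a nonarchimedean local field with ring of integers O and uniformizer ϖ, let v_1,…,v_d be a basis of V = K^{⊕d}, and let σ ∈ A_i be an i-simplex of the apartment complex. Let σ̃ = {x_0 ⪇ x_1 ⪇ ⋯ ⪇ x_i} and σ̃' be any two small lifts of σ to Z^{⊕d}, and let (L_j)_{j∈Z} and (L'_j)_{j∈Z} be the associated periodic lattice chains. Then there exists l ∈ Z such that L'_j = L_{j+l} for all j ∈ Z; consequently the class ι_{v_1,…,v_d,i}(σ) ∈ 𝐁𝐓_i is independent of the choice of small lift. -/

import Mathlib

/-!
STATEMENT 3: Let `K` be a nonarchimedean local field with ring of integers `O` and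
uniformizer `ϖ`, let `v_1,…,v_d` be a basis of `V = K^d`, and let `σ ∈ A_i`.
Any two small lifts of `σ` to `ℤ^d` yield, after periodic extension, lattice chains
`(L_j)` and `(L'_j)` which differ by an index shift: there is `l ∈ ℤ` with
`L'_j = L_{j+l}` for all `j`.  Consequently the class `ι_{v_1,…,v_d,i}(σ) ∈ BT_i`
does not depend on the choice of small lift.

Encoding: a small lift of an `i`-simplex `σ ⊆ A_0 = ℤ^d/ℤ(1,…,1)`, together with
its periodic extension, is exactly a chain `x : ℤ → ℤ^d` with `x j ⪇ x (j+1)` and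
`x (j+i+1) = x j + (1,…,1)` whose image in `A_0` is `σ`; that the two lifts are
lifts of the same `σ` is expressed by the equality of the ranges of `q ∘ x` and
`q ∘ x'`, where `q : ℤ^d → A_0` is the canonical surjection.
-/

/-- A (periodically extended) small lift: a strictly increasing chain of period
`c` (the number of vertices), i.e. `x_{j+c} = x_j + (1,…,1)`. -/
def IsSmallChain (d c : ℕ) (x : ℤ → (Fin d → ℤ)) : Prop :=
  (∀ j : ℤ, x j < x (j + 1)) ∧ ∀ j : ℤ, x (j + (c : ℤ)) = x j + 1

/-- The canonical surjection `q : ℤ^d → A_0 = ℤ^d/ℤ(1,…,1)`. -/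
def qA0 (d : ℕ) : (Fin d → ℤ) →+ (Fin d → ℤ) ⧸ AddSubgroup.zmultiples (1 : Fin d → ℤ) :=
  QuotientAddGroup.mk' _

/-- The lattice `L_j = O ϖ^{(x_j)_1} v_1 ⊕ ⋯ ⊕ O ϖ^{(x_j)_d} v_d` associated to a
small chain. -/
noncomputable def chainLattice (O K : Type) [CommRing O] [Field K] [Algebra O K]
    (ϖ : O) (d : ℕ) (v : Fin d → (Fin d → K)) (x : ℤ → (Fin d → ℤ)) (j : ℤ) :
    Submodule O (Fin d → K) :=
  Submodule.span O (Set.range fun k : Fin d => (algebraMap O K ϖ) ^ (x j k) • v k)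

lemma smono_add_le {f : ℤ → ℤ} (hf : StrictMono f) (a : ℤ) (n : ℕ) :
    f a + n ≤ f (a + n) := by
  induction n with
  | zero => simp
  | succ n ih =>
    have h1 : f (a + n) < f (a + n + 1) := hf (lt_add_one _)
    have h2 : f (a + n) + 1 ≤ f (a + (n + 1)) := by
      rw [show (a + ((n : ℤ) + 1)) = a + n + 1 by ring]
      omega
    push_cast
    omega

lemma piter {d : ℕ} {c : ℤ} {y : ℤ → Fin d → ℤ} (hy : ∀ j, y (j + c) = y j + 1)
    (m j : ℤ) : y (j + m * c) = y j + m • (1 : Fin d → ℤ) := by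
  induction m using Int.induction_on with
  | zero => simp
  | succ m ih =>
    have h1 := hy (j + m * c)
    rw [show j + ((m : ℤ) + 1) * c = j + m * c + c by ring, h1, ih, add_smul, one_smul]
    abel
  | pred m ih =>
    funext k
    have h1 := congrFun (hy (j + (-(m : ℤ) - 1) * c)) k
    have h2 := congrFun ih k
    rw [show j + (-(m : ℤ)) * c = j + (-(m : ℤ) - 1) * c + c by ring] at h2
    simp only [Pi.add_apply, Pi.smul_apply, Pi.one_apply, smul_eq_mul] at h1 h2 ⊢
    omega


/-- STATEMENT 3. -/
theorem statement3 (O : Type) [CommRing O] [IsDomain O] [IsDiscreteValuationRing O]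
    [IsAdicComplete (IsLocalRing.maximalIdeal O) O]
    (K : Type) [Field K] [Algebra O K] [IsFractionRing O K]
    [Finite (IsLocalRing.ResidueField O)]
    (ϖ : O) (hϖ : Irreducible ϖ)
    (d : ℕ) (hd : 1 ≤ d)
    (v : Fin d → (Fin d → K))
    (hv : ∃ b : Module.Basis (Fin d) K (Fin d → K), ∀ k, b k = v k)
    (i : ℕ)
    (x x' : ℤ → (Fin d → ℤ))
    (hx : IsSmallChain d (i + 1) x) (hx' : IsSmallChain d (i + 1) x')
    -- `x` and `x'` are small lifts of the same simplex `σ ∈ A_i`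
    (himg : Set.range (fun j : ℤ => qA0 d (x j)) =
      Set.range (fun j : ℤ => qA0 d (x' j))) :
    ∃ l : ℤ, ∀ j : ℤ,
      chainLattice O K ϖ d v x' j = chainLattice O K ϖ d v x (j + l) := by
  classical
  obtain ⟨hlt, hper⟩ := hx
  obtain ⟨hlt', hper'⟩ := hx'
  set c : ℤ := ((i + 1 : ℕ) : ℤ) with hc
  have hc1 : 1 ≤ c := by simp [hc]
  have sx : StrictMono x := strictMono_int_of_lt_succ hlt
  have sx' : StrictMono x' := strictMono_int_of_lt_succ hlt'
  have key : ∀ j : ℤ, ∃ t : ℤ, x' j = x t := by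
    intro j
    have hmem : qA0 d (x' j) ∈ Set.range (fun j : ℤ => qA0 d (x j)) := by
      rw [himg]; exact ⟨j, rfl⟩
    obtain ⟨t, ht⟩ := hmem
    have hsub : x' j - x t ∈ AddSubgroup.zmultiples (1 : Fin d → ℤ) := by
      have := (QuotientAddGroup.eq_iff_sub_mem).mp ht.symm
      simpa [qA0, QuotientAddGroup.mk'] using this
    obtain ⟨m, hm⟩ := AddSubgroup.mem_zmultiples_iff.mp hsub
    refine ⟨t + m * c, ?_⟩
    rw [piter hper m t, hm]
    abel
  choose f hf using key
  have fmono : StrictMono f := by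
    intro a b hab
    have h := sx' hab
    rw [hf a, hf b] at h
    exact sx.lt_iff_lt.mp h
  have fper : ∀ j, f (j + c) = f j + c := by
    intro j
    apply sx.injective
    rw [← hf, hper' j, hf j, ← hper (f j)]
  have fstep : ∀ j, f (j + 1) = f j + 1 := by
    intro j
    have h1 : f j + 1 ≤ f (j + 1) := fmono (lt_add_one j)
    have h2 : f (j + 1) + ((c - 1).toNat : ℤ) ≤ f (j + 1 + (c - 1).toNat) :=
      smono_add_le fmono (j + 1) _
    have hcn : ((c - 1).toNat : ℤ) = c - 1 := by omega
    rw [hcn, show j + 1 + (c - 1) = j + c by ring, fper j] at h2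
    omega
  have flin : ∀ j : ℤ, f j = j + f 0 := by
    intro j
    induction j using Int.induction_on with
    | zero => simp
    | succ m ih => rw [fstep m, ih]; ring
    | pred m ih =>
      have h := fstep (-(m : ℤ) - 1)
      rw [show -(m : ℤ) - 1 + 1 = -(m : ℤ) by ring, ih] at h
      omega
  refine ⟨f 0, fun j => ?_⟩
  have hxx : x' j = x (j + f 0) := by rw [hf j, flin j]
  unfold chainLattice
  rw [hxx]
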